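/- Let n ≥ 1 and consider ℂ^{n+2} with orthonormal basis e_X, e_1, …, e_n, e_Y. Let H₁ = J ∑_i (|e_X⟩⟨e_i| + h.c.) and H₂ = J ∑_i (|e_i⟩⟨e_Y| + h.c.) with J > 0, and set T = π/(J√n). Then |⟨e_Y, e^{−i H₂ T/2} e^{−i H₁ T/2} e_X⟩| = 1, i.e., the two-step protocol achieves perfect state transfer from X to Y in total time T. -/

import Mathlib

open scoped Matrix Nat

attribute [local instance] Matrix.linftyOpNormedRing Matrix.linftyOpNormedAlgebra

lemma key_exp {m : Type*} [Fintype m] [DecidableEq m] (A : Matrix m m ℂ) (u v : m → ℂ)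
    (a b θ ω : ℂ) (hω : ω ≠ 0) (hab : a * b = ω ^ 2)
    (hAu : A.mulVec u = a • v) (hAv : A.mulVec v = b • u) :
    (NormedSpace.exp ((-(Complex.I * θ)) • A)).mulVec u
      = Complex.cos (θ * ω) • u + (-Complex.I * (a / ω) * Complex.sin (θ * ω)) • v := by
  set z : ℂ := -(Complex.I * θ) with hz
  -- linear map M ↦ M.mulVec u, continuous in finite dimension
  let L : Matrix m m ℂ →ₗ[ℂ] (m → ℂ) :=
    { toFun := fun M => M.mulVec u
      map_add' := fun M N => Matrix.add_mulVec M N u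
      map_smul' := fun c M => Matrix.smul_mulVec c M u }
  have hLc : Continuous L := L.continuous_of_finiteDimensional
  have h1 : HasSum (fun k : ℕ => ((k ! : ℂ)⁻¹ • (z • A) ^ k).mulVec u)
      ((NormedSpace.exp (z • A)).mulVec u) := by
    have := (NormedSpace.exp_series_hasSum_exp' (𝕂 := ℂ) (z • A)).map L hLc
    exact this
  -- powers of A acting on u
  have hpow : ∀ k : ℕ, (A ^ (2 * k)).mulVec u = (ω ^ (2 * k)) • u ∧
      (A ^ (2 * k + 1)).mulVec u = (ω ^ (2 * k) * a) • v := by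
    intro k
    induction k with
    | zero => simp [Matrix.one_mulVec, hAu]
    | succ k ih =>
      have h2 : (A ^ (2 * (k + 1))).mulVec u = (ω ^ (2 * (k + 1))) • u := by
        have e1 : (2 * (k + 1)) = (2 * k + 1) + 1 := by ring
        rw [e1, pow_succ', ← Matrix.mulVec_mulVec, ih.2, Matrix.mulVec_smul, hAv,
          smul_smul, mul_assoc, hab]
        congr 1
        ring
      refine ⟨h2, ?_⟩
      rw [pow_succ', ← Matrix.mulVec_mulVec, h2, Matrix.mulVec_smul, hAu, smul_smul]
  have hzsq : z ^ 2 = -θ ^ 2 := by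
    rw [hz]; ring_nf; rw [Complex.I_sq]; ring
  have hz2k : ∀ k : ℕ, z ^ (2 * k) = (-1) ^ k * θ ^ (2 * k) := by
    intro k
    rw [pow_mul, hzsq, pow_mul, neg_pow, mul_comm]
  -- even part
  have heven : HasSum (fun k : ℕ => ((2 * k)! : ℂ)⁻¹ • ((z • A) ^ (2 * k)).mulVec u)
      (Complex.cos (θ * ω) • u) := by
    have h := (Complex.hasSum_cos (θ * ω)).smul_const u
    refine h.congr_fun fun k => ?_
    rw [smul_pow, Matrix.smul_mulVec, (hpow k).1, smul_smul, smul_smul]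
    congr 1
    have hf : ((2 * k)! : ℂ) ≠ 0 := Nat.cast_ne_zero.2 (Nat.factorial_ne_zero _)
    rw [hz2k, mul_pow]
    field_simp
  -- odd part
  have hodd : HasSum (fun k : ℕ => ((2 * k + 1)! : ℂ)⁻¹ • ((z • A) ^ (2 * k + 1)).mulVec u)
      ((-Complex.I * (a / ω) * Complex.sin (θ * ω)) • v) := by
    have h := ((Complex.hasSum_sin (θ * ω)).mul_left (-Complex.I * (a / ω))).smul_const v
    refine h.congr_fun fun k => ?_
    rw [smul_pow, Matrix.smul_mulVec, (hpow k).2, smul_smul, smul_smul]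
    congr 1
    have hf : ((2 * k + 1)! : ℂ) ≠ 0 := Nat.cast_ne_zero.2 (Nat.factorial_ne_zero _)
    have hzz : z ^ (2 * k + 1) = z * (z ^ (2 * k)) := by rw [pow_succ]; ring
    rw [hzz, hz2k, show (θ * ω) ^ (2 * k + 1) = (θ * ω) * (θ * ω) ^ (2 * k) by rw [pow_succ]; ring,
      mul_pow, hz]
    field_simp
  have h2 : HasSum (fun k : ℕ => ((k ! : ℂ)⁻¹ • (z • A) ^ k).mulVec u)
      (Complex.cos (θ * ω) • u + (-Complex.I * (a / ω) * Complex.sin (θ * ω)) • v) := by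
    refine HasSum.even_add_odd ?_ ?_
    · exact heven.congr_fun fun k => by rw [Matrix.smul_mulVec]
    · exact hodd.congr_fun fun k => by rw [Matrix.smul_mulVec]
  exact h1.unique h2

/- Sites: `Sum.inl k` are the `n` intermediate sites, `Sum.inr false` is `X`,
`Sum.inr true` is `Y`. -/
theorem stmt6 (n : ℕ) (hn : 1 ≤ n) (J : ℝ) (hJ : 0 < J)
    (H1 H2 : Matrix (Fin n ⊕ Bool) (Fin n ⊕ Bool) ℂ)
    (hH1 : ∀ i j, H1 i j =
      if (i = Sum.inr false ∧ ∃ k, j = Sum.inl k) ∨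
         ((∃ k, i = Sum.inl k) ∧ j = Sum.inr false) then (J : ℂ) else 0)
    (hH2 : ∀ i j, H2 i j =
      if (i = Sum.inr true ∧ ∃ k, j = Sum.inl k) ∨
         ((∃ k, i = Sum.inl k) ∧ j = Sum.inr true) then (J : ℂ) else 0)
    (eX : Fin n ⊕ Bool → ℂ) (heX : eX = fun i => if i = Sum.inr false then 1 else 0)
    (T : ℝ) (hT : T = Real.pi / (J * Real.sqrt n)) :
    ‖((NormedSpace.exp ((-(Complex.I * (T / 2))) • H2)).mulVec
        ((NormedSpace.exp ((-(Complex.I * (T / 2))) • H1)).mulVec eX))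
      (Sum.inr true)‖ = 1 := by
  classical
  set s : Fin n ⊕ Bool → ℂ := Sum.elim (fun _ => 1) (fun _ => 0) with hs
  set eY : Fin n ⊕ Bool → ℂ := fun i => if i = Sum.inr true then 1 else 0 with heY
  set ω : ℝ := J * Real.sqrt n with hω
  have hnpos : (0:ℝ) < n := by exact_mod_cast hn
  have hωpos : 0 < ω := by
    have := Real.sqrt_pos.2 hnpos
    positivity
  have hωne : ((ω:ℝ):ℂ) ≠ 0 := by
    exact_mod_cast Complex.ofReal_ne_zero.2 (ne_of_gt hωpos)
  have hω2 : ((ω:ℝ):ℂ) ^ 2 = (n : ℂ) * (J:ℂ) ^ 2 := by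
    have : (ω:ℝ) ^ 2 = n * J ^ 2 := by
      rw [hω, mul_pow, Real.sq_sqrt (le_of_lt hnpos)]; ring
    calc ((ω:ℝ):ℂ) ^ 2 = ((ω ^ 2 : ℝ) : ℂ) := by push_cast; ring
      _ = (n : ℂ) * (J:ℂ) ^ 2 := by rw [this]; push_cast; ring
  -- action of H1
  have h1X : H1.mulVec eX = (J:ℂ) • s := by
    funext i
    simp only [Matrix.mulVec, dotProduct, heX, mul_ite, mul_one, mul_zero,
      Finset.sum_ite_eq' Finset.univ, Finset.mem_univ, if_true]
    rw [hH1]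
    rcases i with k | b
    · simp [hs]
    · simp [hs]
  have h1s : H1.mulVec s = ((n:ℂ) * (J:ℂ)) • eX := by
    funext i
    simp only [Matrix.mulVec, dotProduct, hs, Fintype.sum_sum_type, Sum.elim_inl,
      Sum.elim_inr, mul_one, mul_zero, Finset.sum_const_zero, add_zero]
    have : ∀ k : Fin n, H1 i (Sum.inl k) = if i = Sum.inr false then (J:ℂ) else 0 := by
      intro k
      rw [hH1]
      rcases i with k' | b <;> simp
    rw [Finset.sum_congr rfl fun k _ => this k, Finset.sum_const, Finset.card_univ]
    rcases i with k | b
    · simp [heX]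
    · rcases b with _ | _ <;> simp [heX, mul_comm]
  -- action of H2
  have h2s : H2.mulVec s = ((n:ℂ) * (J:ℂ)) • eY := by
    funext i
    simp only [Matrix.mulVec, dotProduct, hs, Fintype.sum_sum_type, Sum.elim_inl,
      Sum.elim_inr, mul_one, mul_zero, Finset.sum_const_zero, add_zero]
    have : ∀ k : Fin n, H2 i (Sum.inl k) = if i = Sum.inr true then (J:ℂ) else 0 := by
      intro k
      rw [hH2]
      rcases i with k' | b <;> simp
    rw [Finset.sum_congr rfl fun k _ => this k, Finset.sum_const, Finset.card_univ]
    rcases i with k | b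
    · simp [heY]
    · rcases b with _ | _ <;> simp [heY, mul_comm]
  have h2Y : H2.mulVec eY = (J:ℂ) • s := by
    funext i
    simp only [Matrix.mulVec, dotProduct, heY, mul_ite, mul_one, mul_zero,
      Finset.sum_ite_eq' Finset.univ, Finset.mem_univ, if_true]
    rw [hH2]
    rcases i with k | b
    · simp [hs]
    · simp [hs]
  -- the rotation angle is π/2
  have hTω : ((T:ℝ):ℂ) / 2 * ((ω:ℝ):ℂ) = ((Real.pi / 2 : ℝ) : ℂ) := by
    have hTr : T * ω = Real.pi := by
      rw [hT, hω]
      field_simp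
    calc ((T:ℝ):ℂ) / 2 * ((ω:ℝ):ℂ) = ((T * ω : ℝ) : ℂ) / 2 := by push_cast; ring
      _ = ((Real.pi / 2 : ℝ) : ℂ) := by rw [hTr]; push_cast; ring
  have hcos : Complex.cos (((T:ℝ):ℂ) / 2 * ((ω:ℝ):ℂ)) = 0 := by
    rw [hTω, ← Complex.ofReal_cos, Real.cos_pi_div_two, Complex.ofReal_zero]
  have hsin : Complex.sin (((T:ℝ):ℂ) / 2 * ((ω:ℝ):ℂ)) = 1 := by
    rw [hTω, ← Complex.ofReal_sin, Real.sin_pi_div_two, Complex.ofReal_one]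
  have hab1 : (J:ℂ) * ((n:ℂ) * (J:ℂ)) = ((ω:ℝ):ℂ) ^ 2 := by rw [hω2]; ring
  have hab2 : ((n:ℂ) * (J:ℂ)) * (J:ℂ) = ((ω:ℝ):ℂ) ^ 2 := by rw [hω2]; ring
  have e1 : (NormedSpace.exp ((-(Complex.I * (T / 2))) • H1)).mulVec eX
      = (-Complex.I * ((J:ℂ) / ((ω:ℝ):ℂ))) • s := by
    have := key_exp H1 eX s (J:ℂ) ((n:ℂ) * (J:ℂ)) (((T:ℝ):ℂ) / 2) ((ω:ℝ):ℂ)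
      hωne hab1 h1X h1s
    rw [this, hcos, hsin, zero_smul, zero_add, mul_one]
  have e2 : (NormedSpace.exp ((-(Complex.I * (T / 2))) • H2)).mulVec s
      = (-Complex.I * (((n:ℂ) * (J:ℂ)) / ((ω:ℝ):ℂ))) • eY := by
    have := key_exp H2 s eY ((n:ℂ) * (J:ℂ)) (J:ℂ) (((T:ℝ):ℂ) / 2) ((ω:ℝ):ℂ)
      hωne hab2 h2s h2Y
    rw [this, hcos, hsin, zero_smul, zero_add, mul_one]
  rw [e1, Matrix.mulVec_smul, e2]
  have hval : ((-Complex.I * ((J:ℂ) / ((ω:ℝ):ℂ))) •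
      ((-Complex.I * (((n:ℂ) * (J:ℂ)) / ((ω:ℝ):ℂ))) • eY)) (Sum.inr true)
      = (-Complex.I * ((J:ℂ) / ((ω:ℝ):ℂ))) * (-Complex.I * (((n:ℂ) * (J:ℂ)) / ((ω:ℝ):ℂ))) := by
    simp [heY, smul_eq_mul]
  rw [hval]
  have hfinal : (-Complex.I * ((J:ℂ) / ((ω:ℝ):ℂ))) *
      (-Complex.I * (((n:ℂ) * (J:ℂ)) / ((ω:ℝ):ℂ))) = -1 := by
    have h9 : ((n:ℂ) * (J:ℂ) ^ 2) ≠ 0 :=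
      mul_ne_zero (Nat.cast_ne_zero.2 (by omega))
        (pow_ne_zero _ (Complex.ofReal_ne_zero.2 (ne_of_gt hJ)))
    rw [show (-Complex.I * ((J:ℂ) / ((ω:ℝ):ℂ))) *
        (-Complex.I * (((n:ℂ) * (J:ℂ)) / ((ω:ℝ):ℂ)))
        = (Complex.I * Complex.I) * (((n:ℂ) * (J:ℂ) ^ 2) / (((ω:ℝ):ℂ) ^ 2)) by ring,
      Complex.I_mul_I, hω2, div_self h9]
    ring
  rw [hfinal]
  simp
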